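/- Let Ω ⊂ ℂ be a bounded, open, simply connected domain, φ : 𝔻 → Ω a conformal mapping, and ρ a density on Ω. Let Φ(u) = u·log(u + e), which is a strictly increasing bijection of [0,∞) onto [0,∞) with inverse Φ⁻¹. If K_Φ := ‖ρ·(J_φ∘φ⁻¹)/Φ⁻¹(J_φ∘φ⁻¹)‖_{L^Φ(Ω)} < ∞ (where (J_φ∘φ⁻¹)(x) = |φ'(φ⁻¹(x))|², so the expression equals ρ/(J_{φ⁻¹}·Φ⁻¹(1/J_{φ⁻¹}))), then ‖J_φ·(ρ∘φ)‖_{L^Φ(𝔻)} ≤ 3·K_Φ, where J_φ(y)·(ρ∘φ)(y) = |φ'(y)|²·ρ(φ(y)). -/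

import Mathlib

open MeasureTheory Metric Set
open scoped ENNReal NNReal Real

/-- The Luxemburg norm `‖g‖_{L^N(E)} = inf{λ > 0 : ∫_E N(|g|/λ) dx ≤ 1}`. -/
noncomputable def luxemburgNorm (N : ℝ → ℝ) (E : Set ℂ) (g : ℂ → ℝ) : ℝ :=
  sInf {l : ℝ | 0 < l ∧ ∫⁻ x in E, ENNReal.ofReal (N (|g x| / l)) ≤ 1}

/-- The Young function `Φ(u) = u·log(u + e)`. -/
noncomputable def Phifun (u : ℝ) : ℝ := u * Real.log (u + Real.exp 1)

lemma det_mul_complex (c : ℂ) :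
    ((ContinuousLinearMap.smulRight (1 : ℂ →L[ℂ] ℂ) c).restrictScalars ℝ).det = ‖c‖ ^ 2 := by
  have h : (((ContinuousLinearMap.smulRight (1 : ℂ →L[ℂ] ℂ) c).restrictScalars ℝ) :
      ℂ →ₗ[ℝ] ℂ) = Algebra.lmul ℝ ℂ c := by
    ext z
    simp [mul_comm]
  show LinearMap.det _ = _
  rw [h, ← Algebra.norm_apply, Algebra.norm_complex_apply, Complex.normSq_eq_norm_sq]

lemma one_le_log_add_exp {u : ℝ} (hu : 0 ≤ u) : 1 ≤ Real.log (u + Real.exp 1) := by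
  rw [Real.le_log_iff_exp_le (by positivity)]
  linarith

lemma phifun_contOn {J : ℝ} : ContinuousOn Phifun (Icc 0 J) := by
  intro x hx
  have hx0 : 0 ≤ x := hx.1
  have h1 : (0:ℝ) < x + Real.exp 1 := by linarith [Real.exp_pos 1]
  have : ContinuousAt (fun u : ℝ => u * Real.log (u + Real.exp 1)) x :=
    continuousAt_id.mul ((continuousAt_id.add continuousAt_const).log (ne_of_gt h1))
  exact this.continuousWithinAt

lemma phifun_nonneg {u : ℝ} (hu : 0 ≤ u) : 0 ≤ Phifun u := by
  have := one_le_log_add_exp hu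
  unfold Phifun
  nlinarith

lemma phifun_surj {J : ℝ} (hJ : 0 ≤ J) : ∃ u, 0 ≤ u ∧ Phifun u = J := by
  have h0 : Phifun 0 = 0 := by simp [Phifun]
  have hJ' : J ≤ Phifun J := by
    have := one_le_log_add_exp hJ
    unfold Phifun; nlinarith
  have := intermediate_value_Icc hJ (phifun_contOn)
  have hmem : J ∈ Phifun '' Icc 0 J := this (by rw [h0]; exact ⟨hJ, hJ'⟩)
  obtain ⟨u, hu, huJ⟩ := hmem
  exact ⟨u, hu.1, huJ⟩

lemma key_ineq (s a : ℝ) (hs : 0 ≤ s) (ha : 0 ≤ a) :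
    Phifun (s * Real.log (s + Real.exp 1) * a / 3) ≤
      s * Real.log (s + Real.exp 1) * Phifun (a * Real.log (s + Real.exp 1)) := by
  have he : (0:ℝ) < Real.exp 1 := Real.exp_pos 1
  have he1 : (2:ℝ) ≤ Real.exp 1 := by
    have := Real.add_one_le_exp 1; linarith
  set L := Real.log (s + Real.exp 1) with hLdef
  have hL1 : 1 ≤ L := one_le_log_add_exp hs
  have hsexp : s + Real.exp 1 = Real.exp L := by
    rw [hLdef, Real.exp_log (by linarith)]
  set u := a * L with hu
  have hu0 : 0 ≤ u := mul_nonneg ha (by linarith)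
  set B := Real.log (u + Real.exp 1) with hB
  have hB1 : 1 ≤ B := one_le_log_add_exp hu0
  have hexpL : (1:ℝ) ≤ Real.exp L := by linarith
  have h5 : s * L * a / 3 = s * u / 3 := by rw [hu]; ring
  have harg : s * u / 3 + Real.exp 1 ≤ Real.exp L * (u + Real.exp 1) := by
    have h1 : s ≤ Real.exp L := by linarith
    have h2 : s * u ≤ Real.exp L * u := mul_le_mul_of_nonneg_right h1 hu0
    nlinarith
  have hargpos : (0:ℝ) < s * u / 3 + Real.exp 1 := by positivity
  have hlog : Real.log (s * u / 3 + Real.exp 1) ≤ L + B := by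
    calc Real.log (s * u / 3 + Real.exp 1)
        ≤ Real.log (Real.exp L * (u + Real.exp 1)) := Real.log_le_log hargpos harg
      _ = L + B := by
          rw [Real.log_mul (Real.exp_ne_zero L) (by positivity), Real.log_exp]
  unfold Phifun
  rw [h5, ← hB]
  have hsu : 0 ≤ s * u := mul_nonneg hs hu0
  have hLB1 : (0:ℝ) ≤ L * B - 1 := by nlinarith
  have hprod : (0:ℝ) ≤ (L - 1) * (B - 1) := mul_nonneg (by linarith) (by linarith)
  have key : (s * u / 3) * (L + B) ≤ s * L * (u * B) := by
    nlinarith [mul_nonneg hsu hLB1, mul_nonneg hsu hprod]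
  have h4 : (s * u / 3) * Real.log (s * u / 3 + Real.exp 1) ≤ (s * u / 3) * (L + B) :=
    mul_le_mul_of_nonneg_left hlog (by positivity)
  linarith

/-- If `K_Φ := ‖ρ·(J_φ∘φ⁻¹)/Φ⁻¹(J_φ∘φ⁻¹)‖_{L^Φ(Ω)} < ∞`, then the pulled
back weight satisfies `‖J_φ·(ρ∘φ)‖_{L^Φ(𝔻)} ≤ 3·K_Φ`. -/
theorem luxemburg_pullback_weight_bound
    (Ω : Set ℂ) (hΩopen : IsOpen Ω) (hΩbdd : Bornology.IsBounded Ω)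
    (hΩsc : SimplyConnectedSpace Ω)
    (φ φinv : ℂ → ℂ)
    (hφdiff : DifferentiableOn ℂ φ (ball (0:ℂ) 1))
    (hφderiv : ∀ y ∈ ball (0:ℂ) 1, deriv φ y ≠ 0)
    (hφbij : Set.BijOn φ (ball (0:ℂ) 1) Ω)
    (hφinv : Set.InvOn φinv φ (ball (0:ℂ) 1) Ω)
    (ρ : ℂ → ℝ) (hρcont : ContinuousOn ρ Ω) (hρpos : ∀ x ∈ Ω, 0 < ρ x)
    (hρint : IntegrableOn ρ Ω)
    (Φinv : ℝ → ℝ)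
    (hΦinv_left : ∀ u : ℝ, 0 ≤ u → Φinv (Phifun u) = u)
    (hΦinv_right : ∀ u : ℝ, 0 ≤ u → Phifun (Φinv u) = u)
    (KΦ : ℝ)
    (hKΦdef : KΦ = luxemburgNorm Phifun Ω
      (fun x => ρ x * ‖deriv φ (φinv x)‖ ^ 2 / Φinv (‖deriv φ (φinv x)‖ ^ 2)))
    (hKΦfin : {l : ℝ | 0 < l ∧
      ∫⁻ x in Ω, ENNReal.ofReal (Phifun
        (|ρ x * ‖deriv φ (φinv x)‖ ^ 2 / Φinv (‖deriv φ (φinv x)‖ ^ 2)| / l)) ≤ 1}.Nonempty) :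
    luxemburgNorm Phifun (ball (0:ℂ) 1) (fun y => ‖deriv φ y‖ ^ 2 * ρ (φ y)) ≤
      3 * KΦ := by
  have hfd : ∀ y ∈ ball (0:ℂ) 1, HasFDerivWithinAt φ
      ((ContinuousLinearMap.smulRight (1 : ℂ →L[ℂ] ℂ) (deriv φ y)).restrictScalars ℝ)
      (ball (0:ℂ) 1) y := by
    intro y hy
    have hd : DifferentiableAt ℂ φ y :=
      hφdiff.differentiableAt (isOpen_ball.mem_nhds hy)
    exact (hd.hasDerivAt.hasFDerivAt.restrictScalars ℝ).hasFDerivWithinAt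
  -- main step : membership transfer
  have hmain : ∀ l : ℝ, (0 < l ∧
      ∫⁻ x in Ω, ENNReal.ofReal (Phifun
        (|ρ x * ‖deriv φ (φinv x)‖ ^ 2 / Φinv (‖deriv φ (φinv x)‖ ^ 2)| / l)) ≤ 1) →
      (0 < 3 * l ∧
      ∫⁻ y in ball (0:ℂ) 1, ENNReal.ofReal (Phifun
        (|‖deriv φ y‖ ^ 2 * ρ (φ y)| / (3 * l))) ≤ 1) := by
    rintro l ⟨hl, hint⟩
    refine ⟨by linarith, ?_⟩
    have hcov := lintegral_image_eq_lintegral_abs_det_fderiv_mul volume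
      measurableSet_ball hfd hφbij.injOn
      (fun x => ENNReal.ofReal (Phifun
        (|ρ x * ‖deriv φ (φinv x)‖ ^ 2 / Φinv (‖deriv φ (φinv x)‖ ^ 2)| / l)))
    rw [hφbij.image_eq] at hcov
    have hpt : ∀ y ∈ ball (0:ℂ) 1,
        ENNReal.ofReal (Phifun (|‖deriv φ y‖ ^ 2 * ρ (φ y)| / (3 * l))) ≤
        ENNReal.ofReal
          |((ContinuousLinearMap.smulRight (1 : ℂ →L[ℂ] ℂ) (deriv φ y)).restrictScalars ℝ).det| *
        ENNReal.ofReal (Phifun (|ρ (φ y) * ‖deriv φ (φinv (φ y))‖ ^ 2 /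
          Φinv (‖deriv φ (φinv (φ y))‖ ^ 2)| / l)) := by
      intro y hy
      rw [det_mul_complex, abs_of_nonneg (by positivity : (0:ℝ) ≤ ‖deriv φ y‖ ^ 2),
        hφinv.1 hy, ← ENNReal.ofReal_mul (by positivity : (0:ℝ) ≤ ‖deriv φ y‖ ^ 2)]
      apply ENNReal.ofReal_le_ofReal
      have hJpos : 0 < ‖deriv φ y‖ ^ 2 :=
        pow_pos (norm_pos_iff.mpr (hφderiv y hy)) 2
      obtain ⟨u, hu0, huJ⟩ := phifun_surj hJpos.le
      have hs0 : 0 ≤ Φinv (‖deriv φ y‖ ^ 2) := by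
        rw [← huJ, hΦinv_left u hu0]; exact hu0
      have hsP : Phifun (Φinv (‖deriv φ y‖ ^ 2)) = ‖deriv φ y‖ ^ 2 :=
        hΦinv_right _ hJpos.le
      set s := Φinv (‖deriv φ y‖ ^ 2) with hsdef
      have hspos : 0 < s := by
        rcases lt_or_eq_of_le hs0 with h | h
        · exact h
        · exfalso
          rw [← h] at hsP
          simp only [Phifun, zero_mul] at hsP
          linarith
      set L := Real.log (s + Real.exp 1) with hLdef
      have hJ_eq : ‖deriv φ y‖ ^ 2 = s * L := by rw [← hsP]; rfl
      have hr : 0 < ρ (φ y) := hρpos _ (hφbij.mapsTo hy)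
      have e1 : |‖deriv φ y‖ ^ 2 * ρ (φ y)| / (3 * l) =
          s * L * (ρ (φ y) / l) / 3 := by
        rw [abs_of_nonneg (by positivity), hJ_eq]
        ring
      have hs' : s ≠ 0 := ne_of_gt hspos
      have e2 : |ρ (φ y) * ‖deriv φ y‖ ^ 2 / s| / l = (ρ (φ y) / l) * L := by
        rw [abs_of_nonneg (div_nonneg (by positivity) hs0), hJ_eq]
        field_simp
      rw [e1, e2, hJ_eq]
      exact key_ineq s (ρ (φ y) / l) hs0 (div_nonneg hr.le hl.le)
    calc (∫⁻ y in ball (0:ℂ) 1, ENNReal.ofReal (Phifun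
            (|‖deriv φ y‖ ^ 2 * ρ (φ y)| / (3 * l))))
        ≤ ∫⁻ y in ball (0:ℂ) 1, ENNReal.ofReal
            |((ContinuousLinearMap.smulRight (1 : ℂ →L[ℂ] ℂ)
              (deriv φ y)).restrictScalars ℝ).det| *
            ENNReal.ofReal (Phifun (|ρ (φ y) * ‖deriv φ (φinv (φ y))‖ ^ 2 /
              Φinv (‖deriv φ (φinv (φ y))‖ ^ 2)| / l)) :=
          setLIntegral_mono' measurableSet_ball hpt
      _ = ∫⁻ x in Ω, ENNReal.ofReal (Phifun
            (|ρ x * ‖deriv φ (φinv x)‖ ^ 2 / Φinv (‖deriv φ (φinv x)‖ ^ 2)| / l)) := hcov.symm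
      _ ≤ 1 := hint
  -- conclude via infima
  rw [hKΦdef, luxemburgNorm, luxemburgNorm]
  have hbdd : BddBelow {l : ℝ | 0 < l ∧
      ∫⁻ y in ball (0:ℂ) 1, ENNReal.ofReal (Phifun
        (|(fun y => ‖deriv φ y‖ ^ 2 * ρ (φ y)) y| / l)) ≤ 1} :=
    ⟨0, fun x hx => hx.1.le⟩
  have hstep : ∀ b ∈ {l : ℝ | 0 < l ∧
      ∫⁻ x in Ω, ENNReal.ofReal (Phifun
        (|(fun x => ρ x * ‖deriv φ (φinv x)‖ ^ 2 / Φinv (‖deriv φ (φinv x)‖ ^ 2)) x| / l)) ≤ 1},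
      sInf {l : ℝ | 0 < l ∧
      ∫⁻ y in ball (0:ℂ) 1, ENNReal.ofReal (Phifun
        (|(fun y => ‖deriv φ y‖ ^ 2 * ρ (φ y)) y| / l)) ≤ 1} ≤ 3 * b := by
    intro b hb
    exact csInf_le hbdd (hmain b hb)
  have h2 : sInf {l : ℝ | 0 < l ∧
      ∫⁻ y in ball (0:ℂ) 1, ENNReal.ofReal (Phifun
        (|(fun y => ‖deriv φ y‖ ^ 2 * ρ (φ y)) y| / l)) ≤ 1} / 3 ≤
      sInf {l : ℝ | 0 < l ∧
      ∫⁻ x in Ω, ENNReal.ofReal (Phifun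
        (|(fun x => ρ x * ‖deriv φ (φinv x)‖ ^ 2 / Φinv (‖deriv φ (φinv x)‖ ^ 2)) x| / l)) ≤ 1} := by
    apply le_csInf hKΦfin
    intro b hb
    linarith [hstep b hb]
  linarith
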